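/- Let A be symmetric (A^T = A) and U a totally isotropic A-invariant subspace of F_p^n. Then U = ⊕_{i : r_i ≥ 2} (U ∩ V_i), the direct sum being taken over all indices i whose irreducible factor φ_i occurs with multiplicity r_i ≥ 2 in the characteristic polynomial. -/

import Mathlib

open Polynomial Matrix BigOperators

section Aux

variable {R : Type*} [CommRing R] {m : Type*} [Fintype m] [DecidableEq m]

lemma aux_aeval_mul_comm (A : Matrix m m R) (q : R[X]) :
    aeval A q * A = A * aeval A q := by
  have h1 : aeval A q * A = aeval A (q * X) := by rw [_root_.map_mul, aeval_X]
  have h2 : A * aeval A q = aeval A (X * q) := by rw [_root_.map_mul, aeval_X]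
  rw [h1, h2, mul_comm q X]

lemma aux_aeval_transpose (A : Matrix m m R) (q : R[X]) :
    aeval Aᵀ q = (aeval A q)ᵀ := by
  induction q using Polynomial.induction_on with
  | C a => simp [aeval_C, Algebra.algebraMap_eq_smul_one, Matrix.transpose_smul]
  | add p q hp hq => simp [hp, hq]
  | monomial n a ih =>
      have h : (C a * X ^ (n + 1)) = (C a * X ^ n) * X := by ring
      rw [h, _root_.map_mul (aeval Aᵀ) _ X, _root_.map_mul (aeval A) _ X, aeval_X, aeval_X,
        ih, Matrix.transpose_mul, ← ih, aux_aeval_mul_comm]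

lemma aux_dot_aeval {A : Matrix m m R} (hA : Aᵀ = A) (q : R[X]) (u v : m → R) :
    (aeval A q *ᵥ u) ⬝ᵥ v = u ⬝ᵥ (aeval A q *ᵥ v) := by
  have h1 : (aeval A q)ᵀ = aeval A q := by
    rw [← aux_aeval_transpose, hA]
  rw [Matrix.dotProduct_mulVec, ← h1, Matrix.vecMul_transpose, h1]

lemma aux_eval_charpoly (N : Matrix m m R) (μ : R) :
    N.charpoly.eval μ = (Matrix.diagonal (fun _ => μ) - N).det := by
  rw [Matrix.charpoly, ← Polynomial.coe_evalRingHom, RingHom.map_det]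
  congr 1
  ext i j
  by_cases h : i = j
  · subst h; simp [Matrix.charmatrix_apply_eq]
  · simp [Matrix.charmatrix_apply_ne _ _ _ h, Matrix.diagonal_apply_ne _ h]

lemma aux_aeval_mulVec_eigen {N : Matrix m m R} {v : m → R} {μ : R}
    (hv : N *ᵥ v = μ • v) (q : R[X]) :
    aeval N q *ᵥ v = q.eval μ • v := by
  induction q using Polynomial.induction_on with
  | C a => simp [aeval_C, Algebra.algebraMap_eq_smul_one, Matrix.smul_mulVec]
  | add p q hp hq => simp [Matrix.add_mulVec, hp, hq, add_smul]
  | monomial n a ih =>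
      have h : (C a * X ^ (n + 1)) = (C a * X ^ n) * X := by ring
      rw [h, _root_.map_mul (aeval N) _ X, aeval_X, ← Matrix.mulVec_mulVec, hv,
        Matrix.mulVec_smul, ih, smul_smul]
      congr 1
      simp only [eval_mul, eval_X, eval_pow, eval_C]
      ring

end Aux

section Key
variable {K : Type*} [Field K] {m : Type*} [Fintype m] [DecidableEq m]

lemma key_irred_factor (M : Matrix m m K) {φ π : K[X]} (hφm : φ.Monic) (hφi : Irreducible φ)
    (h0 : aeval M φ = 0) (hπm : π.Monic) (hπi : Irreducible π) (hdvd : π ∣ M.charpoly) :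
    π = φ := by
  classical
  set L := π.SplittingField
  set σ : K →+* L := algebraMap K L with hσ
  have hsplit : Splits (π.map σ) := SplittingField.splits π
  have hdeg : π.degree ≠ 0 := fun h => hπi.not_isUnit (isUnit_iff_degree_eq_zero.2 h)
  obtain ⟨μ, hμ⟩ := hsplit.exists_eval_eq_zero (by rwa [degree_map])
  rw [eval_map] at hμ
  have hμ' : aeval μ π = 0 := by rwa [aeval_def]
  -- μ is a root of the charpoly of M over L
  obtain ⟨c, hc⟩ := hdvd
  have hchL : ((M.map σ).charpoly).eval μ = 0 := by
    rw [Matrix.charpoly_map, hc, Polynomial.map_mul, eval_mul, eval_map, hμ, zero_mul]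
  have hdet : (Matrix.diagonal (fun _ => μ) - M.map σ).det = 0 := by
    rw [← aux_eval_charpoly]; exact hchL
  obtain ⟨v, hv0, hv⟩ := (Matrix.exists_mulVec_eq_zero_iff).2 hdet
  have heig : (M.map σ) *ᵥ v = μ • v := by
    rw [Matrix.sub_mulVec] at hv
    have h1 : (Matrix.diagonal (fun _ => μ) : Matrix m m L) *ᵥ v = μ • v := by
      funext i; rw [Matrix.mulVec_diagonal]; rfl
    rw [h1] at hv
    exact (sub_eq_zero.1 hv).symm
  -- φ also kills the eigenvector
  have hφ0 : aeval (M.map σ) (φ.map σ) = 0 := by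
    have h1 : aeval (M.map σ) (φ.map σ) = aeval (M.map σ) φ := by
      rw [hσ, aeval_map_algebraMap]
    have h2 : (M.map σ) = (AlgHom.mapMatrix (Algebra.ofId K L)) M := rfl
    rw [h1, h2, aeval_algHom_apply, h0, map_zero]
  have hφμ : aeval μ φ = 0 := by
    have h3 := aux_aeval_mulVec_eigen heig (φ.map σ)
    rw [hφ0] at h3
    have h4 : (φ.map σ).eval μ • v = 0 := by
      rw [← h3]; simp
    rcases smul_eq_zero.1 h4 with h5 | h5
    · rwa [eval_map, ← aeval_def] at h5
    · exact absurd h5 hv0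
  have e1 : minpoly K μ = π := (minpoly.eq_of_irreducible_of_monic hπi hμ' hπm).symm
  have e2 : minpoly K μ = φ := (minpoly.eq_of_irreducible_of_monic hφi hφμ hφm).symm
  rw [← e1, e2]

end Key

section PolyPow
variable {K : Type*} [Field K]

lemma aux_pow_of_factors (φ : K[X]) (hφi : Irreducible φ) :
    ∀ N (χ : K[X]), χ.natDegree ≤ N → χ.Monic →
      (∀ π : K[X], π.Monic → Irreducible π → π ∣ χ → π = φ) → ∃ s, χ = φ ^ s := by
  have hφd : 0 < φ.natDegree := by
    rcases Nat.eq_zero_or_pos φ.natDegree with h | h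
    · exfalso
      obtain ⟨a, ha⟩ := Polynomial.natDegree_eq_zero.1 h
      have ha0 : a ≠ 0 := fun h0 => hφi.ne_zero (by rw [← ha, h0, map_zero])
      exact hφi.not_isUnit (by rw [← ha]; exact isUnit_C.2 (Ne.isUnit ha0))
    · exact h
  intro N
  induction N with
  | zero =>
      intro χ hd hm _
      have h0 : χ.natDegree = 0 := Nat.le_zero.1 hd
      obtain ⟨a, rfl⟩ := Polynomial.natDegree_eq_zero.1 h0
      have ha : a = 1 := by simpa [Polynomial.Monic, Polynomial.leadingCoeff] using hm
      exact ⟨0, by rw [ha, pow_zero, Polynomial.C_1]⟩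
  | succ N ih =>
      intro χ hd hm hfac
      by_cases h0 : IsUnit χ
      · exact ⟨0, by rw [hm.eq_one_of_isUnit h0, pow_zero]⟩
      · obtain ⟨π, hπm, hπi, hπd⟩ := Polynomial.exists_monic_irreducible_factor χ h0
        have hπφ : π = φ := hfac π hπm hπi hπd
        subst hπφ
        obtain ⟨c, hc⟩ := hπd
        have hcm : c.Monic := hπm.of_mul_monic_left (hc ▸ hm)
        have hcd : c.natDegree ≤ N := by
          have h1 : χ.natDegree = π.natDegree + c.natDegree := by
            rw [hc]; exact Polynomial.natDegree_mul hπm.ne_zero hcm.ne_zero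
          omega
        obtain ⟨s, hs⟩ := ih c hcd hcm (fun π' h1 h2 h3 => hfac π' h1 h2 (hc ▸ h3.mul_left π))
        exact ⟨s + 1, by rw [hc, hs, pow_succ, mul_comm]⟩

end PolyPow

section Restrict
variable {K : Type*} [CommRing K] {V : Type*} [AddCommGroup V] [Module K V]

lemma aux_aeval_restrict (f : V →ₗ[K] V) (p : Submodule K V) (hf : ∀ x ∈ p, f x ∈ p)
    (q : K[X]) (x : p) :
    ((aeval (f.restrict hf) q) x : V) = aeval f q (x : V) := by
  induction q using Polynomial.induction_on generalizing x with
  | C a => simp [aeval_C, Algebra.algebraMap_eq_smul_one, Module.algebraMap_end_apply]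
  | add p q hp hq => simp [hp, hq]
  | monomial n a ih =>
      have h : (C a * X ^ (n + 1)) = (C a * X ^ n) * X := by ring
      rw [h, _root_.map_mul (aeval (f.restrict hf)) _ X, _root_.map_mul (aeval f) _ X,
        aeval_X, aeval_X, Module.End.mul_apply, Module.End.mul_apply,
        ih ((f.restrict hf) x), LinearMap.restrict_coe_apply]

end Restrict

section Compl
variable {K : Type*} [Field K] {V : Type*} [AddCommGroup V] [Module K V] [FiniteDimensional K V]

lemma aux_charpoly_mul_of_isCompl (f : V →ₗ[K] V) (p q : Submodule K V) (h : IsCompl p q)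
    (hp : ∀ x ∈ p, f x ∈ p) (hq : ∀ x ∈ q, f x ∈ q) :
    f.charpoly = (f.restrict hp).charpoly * (f.restrict hq).charpoly := by
  rw [← LinearMap.charpoly_prodMap]
  have key : (Submodule.prodEquivOfIsCompl p q h).conj
      ((f.restrict hp).prodMap (f.restrict hq)) = f := by
    apply LinearMap.ext
    intro v
    obtain ⟨w, rfl⟩ := (Submodule.prodEquivOfIsCompl p q h).surjective v
    rw [LinearEquiv.conj_apply_apply, LinearEquiv.symm_apply_apply]
    simp only [Submodule.coe_prodEquivOfIsCompl', LinearMap.prodMap_apply, map_add]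
    rw [LinearMap.restrict_coe_apply, LinearMap.restrict_coe_apply]
  rw [← LinearEquiv.charpoly_conj (Submodule.prodEquivOfIsCompl p q h)
    ((f.restrict hp).prodMap (f.restrict hq)), key]

lemma aux_charpoly_eq_pow (g : V →ₗ[K] V) {φ : K[X]} (hφm : φ.Monic) (hφi : Irreducible φ)
    (h0 : aeval g φ = 0) : ∃ s, g.charpoly = φ ^ s := by
  classical
  apply aux_pow_of_factors φ hφi g.charpoly.natDegree _ le_rfl g.charpoly_monic
  intro π hπm hπi hdvd
  set b := Module.finBasis K V
  set M := LinearMap.toMatrix b b g with hM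
  have hch : M.charpoly = g.charpoly := LinearMap.charpoly_toMatrix g b
  have hM0 : aeval M φ = 0 := by
    have h1 : M = (LinearMap.toMatrixAlgEquiv b : (V →ₗ[K] V) →ₐ[K] _) g := rfl
    rw [h1, aeval_algHom_apply, h0, map_zero]
  exact key_irred_factor M hφm hφi hM0 hπm hπi (hch ▸ hdvd)

open Module in
lemma aux_finrank_ker_le (f : V →ₗ[K] V) {φ : K[X]} (hφm : φ.Monic) (hφi : Irreducible φ)
    (h2 : ¬ φ ^ 2 ∣ f.charpoly) :
    Module.finrank K (LinearMap.ker (aeval f φ)) ≤ φ.natDegree := by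
  classical
  by_cases h1 : φ ∣ f.charpoly
  case neg =>
    have hc : IsCoprime φ f.charpoly := (hφi.coprime_iff_not_dvd).2 h1
    have hbot : LinearMap.ker (aeval f φ) = ⊥ := by
      rw [eq_bot_iff]
      intro x hx
      obtain ⟨a, b, hab⟩ := hc
      have hx' : aeval f φ x = 0 := hx
      have : x = aeval f (a * φ + b * f.charpoly) x := by
        rw [hab, aeval_one, Module.End.one_apply]
      rw [map_add, LinearMap.add_apply, _root_.map_mul, _root_.map_mul,
        Module.End.mul_apply, Module.End.mul_apply, hx', map_zero,
        LinearMap.aeval_self_charpoly, LinearMap.zero_apply, map_zero, add_zero] at this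
      simp [this]
    rw [hbot]
    simp
  case pos =>
    obtain ⟨ρ, hρ⟩ := h1
    have hφρ : ¬ φ ∣ ρ := fun hd => h2 (by rw [hρ, pow_two]; exact mul_dvd_mul_left φ hd)
    have hcop : IsCoprime φ ρ := (hφi.coprime_iff_not_dvd).2 hφρ
    set B := aeval f φ with hB
    have hker2 : LinearMap.ker (B * B) ≤ LinearMap.ker B := by
      intro x hx
      have hx' : (B * B) x = 0 := hx
      obtain ⟨a, b, hab⟩ := hcop
      have hphi : φ = a * φ ^ 2 + b * f.charpoly := by
        have h3 : (a * φ + b * ρ) * φ = φ := by rw [hab, one_mul]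
        calc φ = (a * φ + b * ρ) * φ := h3.symm
        _ = a * φ ^ 2 + b * (φ * ρ) := by ring
        _ = a * φ ^ 2 + b * f.charpoly := by rw [← hρ]
      have : B x = aeval f (a * φ ^ 2 + b * f.charpoly) x := by rw [← hphi]
      rw [map_add, LinearMap.add_apply, _root_.map_mul, _root_.map_mul,
        Module.End.mul_apply, Module.End.mul_apply, LinearMap.aeval_self_charpoly,
        LinearMap.zero_apply, map_zero, add_zero, map_pow, pow_two,
        Module.End.mul_apply, ← hB] at this
      rw [LinearMap.mem_ker, this]
      have hxx : B (B x) = 0 := by rw [← Module.End.mul_apply, hx']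
      rw [hxx, map_zero]
    have hdisj : Disjoint (LinearMap.ker B) (LinearMap.range B) := by
      rw [Submodule.disjoint_def]
      intro x hk hr
      obtain ⟨y, rfl⟩ := hr
      have : y ∈ LinearMap.ker (B * B) := by
        rw [LinearMap.mem_ker, Module.End.mul_apply]
        exact hk
      exact hker2 this
    have hcompl : IsCompl (LinearMap.ker B) (LinearMap.range B) := by
      refine ⟨hdisj, ?_⟩
      rw [codisjoint_iff]
      apply Submodule.eq_top_of_finrank_eq
      have h4 := Submodule.finrank_sup_add_finrank_inf_eq (LinearMap.ker B) (LinearMap.range B)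
      rw [disjoint_iff.1 hdisj, finrank_bot, add_zero] at h4
      have h5 := LinearMap.finrank_range_add_finrank_ker B
      omega
    have hcomm : ∀ (x : V), B (f x) = f (B x) := by
      intro x
      have : B * f = f * B := by
        calc B * f = aeval f φ * aeval f X := by rw [hB, aeval_X]
        _ = aeval f (φ * X) := (_root_.map_mul _ _ _).symm
        _ = aeval f (X * φ) := by rw [mul_comm]
        _ = aeval f X * aeval f φ := _root_.map_mul _ _ _
        _ = f * B := by rw [aeval_X, hB]
      calc B (f x) = (B * f) x := rfl
      _ = (f * B) x := by rw [this]
      _ = f (B x) := rfl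
    have hfk : ∀ x ∈ LinearMap.ker B, f x ∈ LinearMap.ker B := by
      intro x hx
      rw [LinearMap.mem_ker] at hx ⊢
      rw [hcomm, hx, map_zero]
    have hfr : ∀ x ∈ LinearMap.range B, f x ∈ LinearMap.range B := by
      rintro x ⟨y, rfl⟩
      exact ⟨f y, (hcomm y)⟩
    have hg0 : aeval (f.restrict hfk) φ = 0 := by
      apply LinearMap.ext
      intro x
      apply Subtype.ext
      rw [aux_aeval_restrict f _ hfk φ x, LinearMap.zero_apply]
      have : (x : V) ∈ LinearMap.ker B := x.2
      rw [LinearMap.mem_ker] at this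
      simpa using this
    obtain ⟨s, hs⟩ := aux_charpoly_eq_pow (f.restrict hfk) hφm hφi hg0
    have hfin : finrank K (LinearMap.ker B) = s * φ.natDegree := by
      rw [← LinearMap.charpoly_natDegree (f.restrict hfk), hs, Polynomial.natDegree_pow]
    have hsle : s ≤ 1 := by
      by_contra hcon
      push_neg at hcon
      apply h2
      have hdd : φ ^ 2 ∣ φ ^ s := pow_dvd_pow φ (by omega)
      have hchdvd : (f.restrict hfk).charpoly ∣ f.charpoly := by
        rw [aux_charpoly_mul_of_isCompl f _ _ hcompl hfk hfr]
        exact dvd_mul_right _ _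
      exact (hdd.trans (hs ▸ dvd_rfl)).trans hchdvd
    rw [hfin]
    calc s * φ.natDegree ≤ 1 * φ.natDegree := Nat.mul_le_mul_right _ hsle
    _ = φ.natDegree := one_mul _
end Compl


/-- **Lemma.** Primary decomposition setting: p prime, A an n×n symmetric matrix over F_p with
χ(A;x) = φ_1^{r_1} ⋯ φ_k^{r_k} (distinct monic irreducibles φ_i, r_i ≥ 1),
V_i = ker φ_i^{r_i}(A).  If U is a totally isotropic A-invariant subspace, then
U = ⊕_{i : r_i ≥ 2} (U ∩ V_i) (an internal direct sum). -/
theorem totally_isotropic_eq_direct_sum {p n k : ℕ} (hp : p.Prime)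
    (A : Matrix (Fin n) (Fin n) (ZMod p)) (hA : Aᵀ = A)
    (φ : Fin k → Polynomial (ZMod p)) (r : Fin k → ℕ)
    (hmon : ∀ i, (φ i).Monic) (hirr : ∀ i, Irreducible (φ i))
    (hinj : Function.Injective φ) (hr : ∀ i, 1 ≤ r i)
    (hchar : A.charpoly = ∏ i, φ i ^ r i)
    (U : Submodule (ZMod p) (Fin n → ZMod p))
    (hUiso : ∀ u ∈ U, ∀ v ∈ U, u ⬝ᵥ v = 0)
    (hUinv : ∀ x ∈ U, A *ᵥ x ∈ U) :
    U = (⨆ (i : Fin k) (_ : 2 ≤ r i),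
          U ⊓ LinearMap.ker (Matrix.toLin' (Polynomial.aeval A (φ i ^ r i)))) ∧
    iSupIndep (fun i : {i : Fin k // 2 ≤ r i} =>
      U ⊓ LinearMap.ker (Matrix.toLin' (Polynomial.aeval A (φ i.1 ^ r i.1)))) := by
  classical
  haveI := Fact.mk hp
  set s : Fin k → Polynomial (ZMod p) := fun i => φ i ^ r i with hs
  set Kk : Fin k → Submodule (ZMod p) (Fin n → ZMod p) :=
    fun i => LinearMap.ker (Matrix.toLin' (Polynomial.aeval A (s i))) with hKk
  -- membership in Kk
  have mem_Kk : ∀ i x, x ∈ Kk i ↔ aeval A (s i) *ᵥ x = 0 := by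
    intro i x
    simp [hKk, LinearMap.mem_ker, Matrix.toLin'_apply]
  -- sums of matrices acting on vectors
  have sum_mulVec : ∀ (t : Finset (Fin k)) (M : Fin k → Matrix (Fin n) (Fin n) (ZMod p))
      (x : Fin n → ZMod p), (∑ i ∈ t, M i) *ᵥ x = ∑ i ∈ t, M i *ᵥ x := by
    intro t M x
    induction t using Finset.induction_on with
    | empty => simp [Matrix.zero_mulVec]
    | insert a t' hnotmem ih =>
                           rw [Finset.sum_insert hnotmem, Finset.sum_insert hnotmem,
                             Matrix.add_mulVec, ih]
  -- polynomial invariance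
  have poly_inv : ∀ (W : Submodule (ZMod p) (Fin n → ZMod p)),
      (∀ x ∈ W, A *ᵥ x ∈ W) → ∀ (q : (ZMod p)[X]) (x), x ∈ W → aeval A q *ᵥ x ∈ W := by
    intro W hW q
    induction q using Polynomial.induction_on with
    | C a =>   intro x hx
               have : aeval A (C a) *ᵥ x = a • x := by
                 rw [aeval_C, Algebra.algebraMap_eq_smul_one, Matrix.smul_mulVec,
                   Matrix.one_mulVec]
               rw [this]; exact W.smul_mem a hx
    | add q1 q2 h1 h2 =>   intro x hx
                           rw [map_add, Matrix.add_mulVec]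
                           exact W.add_mem (h1 x hx) (h2 x hx)
    | monomial m' a ih =>
        intro x hx
        have h : (C a * X ^ (m' + 1)) = (C a * X ^ m') * X := by ring
        rw [h, _root_.map_mul (aeval A) _ X, aeval_X, ← Matrix.mulVec_mulVec]
        exact ih (A *ᵥ x) (hW x hx)
  -- pairwise coprimality
  have hcop' : ∀ i j, i ≠ j → IsCoprime (φ i) (φ j) := by
    intro i j hij
    refine (hirr i).coprime_iff_not_dvd.2 (fun hdvd => ?_)
    have hass : Associated (φ i) (φ j) := (hirr i).associated_of_dvd (hirr j) hdvd
    exact hij (hinj (Polynomial.eq_of_monic_of_associated (hmon i) (hmon j) hass))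
  have hcop : ∀ i j, i ≠ j → IsCoprime (s i) (s j) := fun i j hij =>
    ((hcop' i j hij).pow : IsCoprime (φ i ^ r i) (φ j ^ r j))
  -- Cayley-Hamilton
  have hCH : aeval A (∏ i, s i) = 0 := by
    rw [← hchar]; exact Matrix.aeval_self_charpoly A
  -- spanning
  have hspan : ∀ (W : Submodule (ZMod p) (Fin n → ZMod p)),
      (∀ x ∈ W, A *ᵥ x ∈ W) → W ≤ ⨆ i, W ⊓ Kk i := by
    intro W hW
    rcases isEmpty_or_nonempty (Fin k) with hk | hk
    · intro x hx
      have h1 : (∏ i, s i) = 1 := by rw [Finset.univ_eq_empty, Finset.prod_empty]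
      have h0 : (1 : Matrix (Fin n) (Fin n) (ZMod p)) = 0 := by
        have h2 := hCH
        rw [h1, _root_.map_one] at h2
        exact h2
      have : x = 0 := by
        rw [← Matrix.one_mulVec x, h0, Matrix.zero_mulVec]
      rw [this]; exact Submodule.zero_mem _
    · have hpair : Pairwise (Function.onFun IsCoprime fun i : (Finset.univ : Finset (Fin k)) => s i) := by
        intro i j hij
        exact hcop i.1 j.1 (fun h => hij (Subtype.ext h))
      obtain ⟨μ, hμ⟩ := (exists_sum_eq_one_iff_pairwise_coprime
        (t := (Finset.univ : Finset (Fin k))) Finset.univ_nonempty (s := s)).2 hpair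
      intro x hx
      have hxeq : x = ∑ i, aeval A (μ i * ∏ j ∈ Finset.univ \ {i}, s j) *ᵥ x := by
        have h1 : aeval A (∑ i, μ i * ∏ j ∈ Finset.univ \ {i}, s j) = 1 := by
          rw [hμ, _root_.map_one]
        have h2 : (∑ i, aeval A (μ i * ∏ j ∈ Finset.univ \ {i}, s j)) = 1 := by
          rw [← h1, map_sum]
        rw [← sum_mulVec, h2, Matrix.one_mulVec]
      rw [hxeq]
      apply Submodule.sum_mem
      intro i _
      apply Submodule.mem_iSup_of_mem i
      refine Submodule.mem_inf.2 ⟨poly_inv W hW _ x hx, ?_⟩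
      · rw [mem_Kk, Matrix.mulVec_mulVec, ← _root_.map_mul]
        have h3 : s i * (μ i * ∏ j ∈ Finset.univ \ {i}, s j) = μ i * ∏ j, s j := by
          rw [Finset.prod_eq_mul_prod_diff_singleton_of_mem (Finset.mem_univ i) s]; ring
        rw [h3, _root_.map_mul, ← Matrix.mulVec_mulVec, hCH, Matrix.zero_mulVec,
          Matrix.mulVec_zero]
  -- orthogonality between distinct primary components
  have horth : ∀ i j, i ≠ j → ∀ u v, u ∈ Kk i → v ∈ Kk j → u ⬝ᵥ v = 0 := by
    intro i j hij u v hu hv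
    obtain ⟨a, b, hab⟩ := hcop i j hij
    rw [mem_Kk] at hu hv
    have h1 : v = aeval A (a * s i) *ᵥ v + aeval A (b * s j) *ᵥ v := by
      rw [← Matrix.add_mulVec, ← map_add, hab, _root_.map_one, Matrix.one_mulVec]
    have h2 : aeval A (b * s j) *ᵥ v = 0 := by
      rw [_root_.map_mul, ← Matrix.mulVec_mulVec, hv, Matrix.mulVec_zero]
    have h3 : u ⬝ᵥ (aeval A (a * s i) *ᵥ v) = 0 := by
      rw [← aux_dot_aeval hA, _root_.map_mul, ← Matrix.mulVec_mulVec, hu,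
        Matrix.mulVec_zero, zero_dotProduct]
    calc u ⬝ᵥ v = u ⬝ᵥ (aeval A (a * s i) *ᵥ v + aeval A (b * s j) *ᵥ v) := by rw [← h1]
    _ = u ⬝ᵥ (aeval A (a * s i) *ᵥ v) + u ⬝ᵥ (aeval A (b * s j) *ᵥ v) := by
        rw [dotProduct_add]
    _ = 0 := by rw [h2, h3, dotProduct_zero, add_zero]
  -- full independence
  have hind : iSupIndep Kk := by
    rw [iSupIndep_def]
    intro i
    have hle : (⨆ j, ⨆ (_ : j ≠ i), Kk j) ≤
        LinearMap.ker (Matrix.toLin' (aeval A (∏ j ∈ Finset.univ \ {i}, s j))) := by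
      refine iSup_le fun j => iSup_le fun hne => ?_
      intro x hx
      rw [mem_Kk] at hx
      have hdvd : s j ∣ ∏ j' ∈ Finset.univ \ {i}, s j' :=
        Finset.dvd_prod_of_mem s (by simp [hne])
      obtain ⟨c, hc⟩ := hdvd
      rw [LinearMap.mem_ker, Matrix.toLin'_apply, hc, mul_comm, _root_.map_mul,
        ← Matrix.mulVec_mulVec, hx, Matrix.mulVec_zero]
    refine Disjoint.mono_right hle ?_
    rw [Submodule.disjoint_def]
    intro x hxi hxψ
    rw [mem_Kk] at hxi
    rw [LinearMap.mem_ker, Matrix.toLin'_apply] at hxψ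
    have hcp : IsCoprime (s i) (∏ j ∈ Finset.univ \ {i}, s j) := by
      apply IsCoprime.prod_right
      intro j hj
      rw [Finset.mem_sdiff, Finset.mem_singleton] at hj
      exact hcop i j (fun h => hj.2 (h.symm))
    obtain ⟨a, b, hab⟩ := hcp
    have : x = aeval A (a * s i) *ᵥ x + aeval A (b * ∏ j ∈ Finset.univ \ {i}, s j) *ᵥ x := by
      rw [← Matrix.add_mulVec, ← map_add, hab, _root_.map_one, Matrix.one_mulVec]
    rw [_root_.map_mul, _root_.map_mul, ← Matrix.mulVec_mulVec, ← Matrix.mulVec_mulVec,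
      hxi, hxψ] at this
    simp only [Matrix.mulVec_zero, add_zero, zero_add] at this
    exact this
  -- the bridge to linear maps
  have hbridge : ∀ q : (ZMod p)[X], Matrix.toLin' (aeval A q) = aeval (Matrix.toLin' A) q := by
    intro q
    have h1 : ∀ (M : Matrix (Fin n) (Fin n) (ZMod p)), Matrix.toLin' M = Matrix.toLinAlgEquiv' M := by
      intro M
      apply LinearMap.ext
      intro v
      rw [Matrix.toLinAlgEquiv'_apply, Matrix.toLin'_apply]
    rw [h1, h1]
    exact (aeval_algHom_apply (Matrix.toLinAlgEquiv' :
      Matrix (Fin n) (Fin n) (ZMod p) ≃ₐ[ZMod p] _) A q).symm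
  have hcf : (Matrix.toLin' A).charpoly = A.charpoly := by
    rw [← LinearMap.charpoly_toMatrix (Matrix.toLin' A) (Pi.basisFun (ZMod p) (Fin n)),
      LinearMap.toMatrix_eq_toMatrix', LinearMap.toMatrix'_toLin']
  -- the crux : multiplicity-one components meet U trivially
  have hcrux : ∀ i, r i = 1 → U ⊓ Kk i = ⊥ := by
    intro i hri
    set d := (φ i).natDegree with hd
    -- ¬ φ i ^ 2 ∣ charpoly
    have h2 : ¬ (φ i) ^ 2 ∣ (Matrix.toLin' A).charpoly := by
      rw [hcf, hchar]
      intro hdvd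
      have hψcop : IsCoprime (φ i) (∏ j ∈ Finset.univ \ {i}, s j) := by
        apply IsCoprime.prod_right
        intro j hj
        rw [Finset.mem_sdiff, Finset.mem_singleton] at hj
        have := hcop i j (fun h => hj.2 h.symm)
        rw [hs] at this
        simp only at this
        rw [hri, pow_one] at this
        exact this
      have hprod : (∏ j, s j) = φ i * ∏ j ∈ Finset.univ \ {i}, s j := by
        rw [Finset.prod_eq_mul_prod_diff_singleton_of_mem (Finset.mem_univ i) s]
        congr 1
        rw [hs]; simp only; rw [hri, pow_one]
      rw [hprod, pow_two] at hdvd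
      have hφ0 : φ i ≠ 0 := (hirr i).ne_zero
      have hdvd2 : φ i ∣ ∏ j ∈ Finset.univ \ {i}, s j :=
        (mul_dvd_mul_iff_left hφ0).1 hdvd
      exact (hirr i).not_isUnit (hψcop.isUnit_of_dvd' dvd_rfl hdvd2)
    have hbd : Module.finrank (ZMod p) (LinearMap.ker (aeval (Matrix.toLin' A) (φ i))) ≤ d :=
      aux_finrank_ker_le (Matrix.toLin' A) (hmon i) (hirr i) h2
    have hKki : Kk i = LinearMap.ker (aeval (Matrix.toLin' A) (φ i)) := by
      rw [hKk]
      simp only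
      rw [hs]
      simp only
      rw [hri, pow_one, hbridge]
    -- now show U ⊓ Kk i = ⊥
    by_contra hne
    obtain ⟨w, hwmem, hw0⟩ := (Submodule.ne_bot_iff _).1 hne
    obtain ⟨hwU, hwK⟩ := Submodule.mem_inf.1 hwmem
    have hwker : aeval A (φ i) *ᵥ w = 0 := by
      have := (mem_Kk i w).1 hwK
      rw [hs] at this; simp only at this; rwa [hri, pow_one] at this
    -- the cyclic map
    set θ : (ZMod p)[X] →ₗ[ZMod p] (Fin n → ZMod p) :=
      { toFun := fun q => aeval A q *ᵥ w
        map_add' := by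
          intro q1 q2
          show aeval A (q1 + q2) *ᵥ w = aeval A q1 *ᵥ w + aeval A q2 *ᵥ w
          rw [map_add, Matrix.add_mulVec]
        map_smul' := by
          intro c q
          show aeval A (c • q) *ᵥ w = c • (aeval A q *ᵥ w)
          rw [Polynomial.smul_eq_C_mul, _root_.map_mul, aeval_C,
            Algebra.algebraMap_eq_smul_one, smul_mul_assoc, one_mul,
            Matrix.smul_mulVec] } with hθ
    set θd := θ.comp (Submodule.subtype (Polynomial.degreeLT (ZMod p) d)) with hθd
    haveI : FiniteDimensional (ZMod p) (Polynomial.degreeLT (ZMod p) d) :=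
      Module.Finite.equiv (Polynomial.degreeLTEquiv (ZMod p) d).symm
    have hfrdom : Module.finrank (ZMod p) (Polynomial.degreeLT (ZMod p) d) = d := by
      rw [LinearEquiv.finrank_eq (Polynomial.degreeLTEquiv (ZMod p) d), Module.finrank_fin_fun]
    have hker : LinearMap.ker θd = ⊥ := by
      rw [eq_bot_iff]
      rintro ⟨q, hq⟩ hqker
      rw [LinearMap.mem_ker, hθd, LinearMap.comp_apply, Submodule.subtype_apply] at hqker
      have hqw : aeval A q *ᵥ w = 0 := hqker
      rw [Submodule.mem_bot]
      apply Subtype.ext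
      simp only [Submodule.coe_zero]
      by_contra hq0
      have hdeg : q.degree < d := Polynomial.mem_degreeLT.1 hq
      have hndvd : ¬ φ i ∣ q := by
        intro hdvd
        have := Polynomial.degree_le_of_dvd hdvd hq0
        rw [Polynomial.degree_eq_natDegree ((hirr i).ne_zero), ← hd] at this
        exact absurd (lt_of_le_of_lt this hdeg) (lt_irrefl _)
      have hcpq : IsCoprime (φ i) q := (hirr i).coprime_iff_not_dvd.2 hndvd
      obtain ⟨a, b, hab⟩ := hcpq
      have : w = aeval A (a * φ i) *ᵥ w + aeval A (b * q) *ᵥ w := by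
        rw [← Matrix.add_mulVec, ← map_add, hab, _root_.map_one, Matrix.one_mulVec]
      rw [_root_.map_mul, _root_.map_mul, ← Matrix.mulVec_mulVec, ← Matrix.mulVec_mulVec,
        hwker, hqw] at this
      simp only [Matrix.mulVec_zero, add_zero, zero_add] at this
      exact hw0 this
    have hrange_le : LinearMap.range θd ≤ U ⊓ Kk i := by
      rintro x ⟨⟨q, hq⟩, rfl⟩
      have hx : θd ⟨q, hq⟩ = aeval A q *ᵥ w := rfl
      rw [hx, Submodule.mem_inf]
      constructor
      · exact poly_inv U hUinv q w hwU
      · rw [mem_Kk, Matrix.mulVec_mulVec, ← _root_.map_mul, mul_comm, _root_.map_mul,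
          ← Matrix.mulVec_mulVec]
        have hsw : aeval A (s i) *ᵥ w = 0 := (mem_Kk i w).1 hwK
        rw [hsw, Matrix.mulVec_zero]
    have hfrrange : Module.finrank (ZMod p) (LinearMap.range θd) = d := by
      have := LinearMap.finrank_range_add_finrank_ker θd
      rw [hker, finrank_bot, add_zero, hfrdom] at this
      exact this
    have hrange_eq : LinearMap.range θd = Kk i := by
      apply Submodule.eq_of_le_of_finrank_le (le_trans hrange_le inf_le_right)
      rw [hfrrange, hKki]
      exact hbd
    have hKU : Kk i ≤ U := by
      rw [← hrange_eq]
      exact le_trans hrange_le inf_le_left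
    -- w is orthogonal to everything
    have hwzero : w = 0 := by
      set θw : (Fin n → ZMod p) →ₗ[ZMod p] ZMod p :=
        { toFun := fun x => w ⬝ᵥ x
          map_add' := by
            intro x y
            show w ⬝ᵥ (x + y) = w ⬝ᵥ x + w ⬝ᵥ y
            rw [dotProduct_add]
          map_smul' := by
            intro c x
            show w ⬝ᵥ (c • x) = c • (w ⬝ᵥ x)
            rw [dotProduct_smul, smul_eq_mul] } with hθw
      have hY : ∀ j, Kk j ≤ LinearMap.ker θw := by
        intro j x hx
        rw [LinearMap.mem_ker]
        by_cases hji : j = i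
        · subst hji
          exact hUiso w hwU x (hKU hx)
        · exact horth i j (fun h => hji h.symm) w x hwK hx
      have htop : (⊤ : Submodule (ZMod p) (Fin n → ZMod p)) ≤ LinearMap.ker θw := by
        refine le_trans (hspan ⊤ (fun x _ => trivial)) ?_
        refine iSup_le fun j => le_trans inf_le_right (hY j)
      funext j'
      have : θw (Pi.single j' 1) = 0 := htop trivial
      rw [hθw] at this
      simp only [LinearMap.coe_mk, AddHom.coe_mk] at this
      rw [dotProduct_single, mul_one] at this
      exact this
    exact hw0 hwzero
  constructor
  · apply le_antisymm
    · refine le_trans (hspan U hUinv) (iSup_le fun i => ?_)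
      by_cases h2r : 2 ≤ r i
      · exact le_iSup_of_le i (le_iSup_of_le h2r le_rfl)
      · have hri : r i = 1 := by have := hr i; omega
        rw [hcrux i hri]
        exact bot_le
    · exact iSup_le fun i => iSup_le fun _ => inf_le_left
  · exact (hind.comp Subtype.val_injective).mono (fun i => inf_le_right)
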